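/- Let Q be an integral commutative quantale. For a proper ideal I of Q, the following are equivalent: (1) I is semiprime (x² ∈ I implies x ∈ I); (2) I is an intersection of prime ideals; (3) I is a radical ideal (R(I) = I). -/
import Mathlib


class ICQuantale (Q : Type*) extends CompleteLattice Q, Mul Q where
  mul_assoc : ∀ x y z : Q, x * y * z = x * (y * z)
  mul_comm : ∀ x y : Q, x * y = y * x
  mul_sSup : ∀ (x : Q) (s : Set Q), x * sSup s = ⨆ y ∈ s, x * y
  mul_top : ∀ x : Q, x * ⊤ = x

variable {Q : Type*} [ICQuantale Q]

def qpow (x : Q) : ℕ → Q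
  | 0 => ⊤
  | n+1 => qpow x n * x

def IsIdeal (I : Set Q) : Prop :=
  I.Nonempty ∧ (∀ x ∈ I, ∀ y ∈ I, x ⊔ y ∈ I) ∧ (∀ x ∈ I, ∀ l, l ≤ x → l ∈ I)

def res (I J : Set Q) : Set Q := {x | ∀ j ∈ J, x * j ∈ I}

def prodIdeal (I J : Set Q) : Set Q :=
  {l | ∃ F : Finset (Q × Q), (∀ p ∈ F, p.1 ∈ I ∧ p.2 ∈ J) ∧ l ≤ F.sup (fun p => p.1 * p.2)}

def rad (I : Set Q) : Set Q := {x | ∃ n, 1 ≤ n ∧ qpow x n ∈ I}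

def IsPrimeIdeal (P : Set Q) : Prop :=
  IsIdeal P ∧ P ≠ Set.univ ∧ ∀ x y : Q, x * y ∈ P → x ∈ P ∨ y ∈ P

def IsPrimaryIdeal (I : Set Q) : Prop :=
  IsIdeal I ∧ I ≠ Set.univ ∧ ∀ x y : Q, x * y ∈ I → x ∈ I ∨ ∃ n, 1 ≤ n ∧ qpow y n ∈ I

def MultClosed (S : Set Q) : Prop := ⊤ ∈ S ∧ ∀ x ∈ S, ∀ y ∈ S, x * y ∈ S

def ann (S : Set Q) : Set Q := {x | ∀ s ∈ S, x * s = ⊥}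

section Aux
variable {Q : Type*} [ICQuantale Q]

lemma mul_sup' (x a b : Q) : x * (a ⊔ b) = x * a ⊔ x * b := by
  have h := ICQuantale.mul_sSup x {a, b}
  rwa [sSup_pair, iSup_pair] at h

lemma mul_mono' {a b : Q} (x : Q) (h : a ≤ b) : x * a ≤ x * b := by
  have : x * b = x * a ⊔ x * b := by rw [← mul_sup', sup_eq_right.mpr h]
  rw [this]; exact le_sup_left

lemma mul_le_left' (x y : Q) : x * y ≤ x := by
  have := mul_mono' x (le_top : y ≤ ⊤)
  rwa [ICQuantale.mul_top] at this

lemma mul_le_right' (x y : Q) : x * y ≤ y := by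
  rw [ICQuantale.mul_comm]; exact mul_le_left' y x

lemma top_mul' (x : Q) : ⊤ * x = x := by
  rw [ICQuantale.mul_comm, ICQuantale.mul_top]

lemma qpow_one' (x : Q) : qpow x 1 = x := by
  show qpow x 0 * x = x
  show (⊤ : Q) * x = x
  exact top_mul' x

lemma qpow_add' (x : Q) (m n : ℕ) : qpow x (m + n) = qpow x m * qpow x n := by
  induction n with
  | zero => simp [qpow, ICQuantale.mul_top]
  | succ k ih =>
    show qpow x (m + k) * x = qpow x m * (qpow x k * x)
    rw [ih, ICQuantale.mul_assoc]

lemma qpow_anti' (x : Q) {m n : ℕ} (h : m ≤ n) : qpow x n ≤ qpow x m := by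
  obtain ⟨k, rfl⟩ := Nat.exists_eq_add_of_le h
  rw [qpow_add']
  exact mul_le_left' _ _

lemma ideal_bot_mem {I : Set Q} (hI : IsIdeal I) : (⊥ : Q) ∈ I := by
  obtain ⟨a, ha⟩ := hI.1
  exact hI.2.2 a ha ⊥ bot_le

lemma mem_of_pow_mem {I : Set Q} (hI : IsIdeal I) (hsp : ∀ x : Q, x * x ∈ I → x ∈ I) :
    ∀ n, 1 ≤ n → ∀ x : Q, qpow x n ∈ I → x ∈ I := by
  intro n
  induction n using Nat.strong_induction_on with
  | _ n ih =>
    intro hn x hx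
    match n, hn with
    | 1, _ => rwa [qpow_one'] at hx
    | (k+2), _ =>
      have h1 : qpow x (2*(k+1)) ≤ qpow x (k+2) := qpow_anti' x (by omega)
      have h2 : qpow x (2*(k+1)) ∈ I := hI.2.2 _ hx _ h1
      have h3 : qpow x (k+1) * qpow x (k+1) ∈ I := by
        rw [← qpow_add']
        have : (k+1) + (k+1) = 2*(k+1) := by omega
        rw [this]; exact h2
      exact ih (k+1) (by omega) (by omega) x (hsp _ h3)

lemma exists_prime_avoid {I : Set Q} (hI : IsIdeal I)
    (hsp : ∀ x : Q, x * x ∈ I → x ∈ I) {a : Q} (ha : a ∉ I) :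
    ∃ P : Set Q, IsPrimeIdeal P ∧ I ⊆ P ∧ a ∉ P := by
  set A : Set (Set Q) := {J | IsIdeal J ∧ I ⊆ J ∧ ∀ n, 1 ≤ n → qpow a n ∉ J} with hA
  have hIA : I ∈ A := by
    refine ⟨hI, le_refl _, fun n hn hmem => ha ?_⟩
    exact mem_of_pow_mem hI hsp n hn a hmem
  have hchaincond : ∀ c ⊆ A, IsChain (· ⊆ ·) c → c.Nonempty →
      ∃ ub ∈ A, ∀ s ∈ c, s ⊆ ub := by
    intro c hcA hchain hcne
    refine ⟨⋃₀ c, ⟨⟨?_, ?_, ?_⟩, ?_, ?_⟩, fun s hs => Set.subset_sUnion_of_mem hs⟩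
    · obtain ⟨J, hJ⟩ := hcne
      obtain ⟨w, hw⟩ := (hcA hJ).1.1
      exact ⟨w, J, hJ, hw⟩
    · rintro u ⟨J1, hJ1, hu⟩ v ⟨J2, hJ2, hv⟩
      rcases hchain.total hJ1 hJ2 with h | h
      · exact ⟨J2, hJ2, (hcA hJ2).1.2.1 u (h hu) v hv⟩
      · exact ⟨J1, hJ1, (hcA hJ1).1.2.1 u hu v (h hv)⟩
    · rintro u ⟨J, hJ, hu⟩ l hl
      exact ⟨J, hJ, (hcA hJ).1.2.2 u hu l hl⟩
    · obtain ⟨J, hJ⟩ := hcne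
      exact ((hcA hJ).2.1).trans (Set.subset_sUnion_of_mem hJ)
    · rintro n hn ⟨J, hJ, hmem⟩
      exact (hcA hJ).2.2 n hn hmem


  obtain ⟨M, hIM, hMA, hMmax⟩ := zorn_subset_nonempty A hchaincond I hIA
  obtain ⟨hMideal, hIsubM, hMavoid⟩ := hMA
  have haM : a ∉ M := by
    intro h
    exact hMavoid 1 le_rfl (by rwa [qpow_one'])
  have hMproper : M ≠ Set.univ := fun h => haM (h ▸ Set.mem_univ a)
  refine ⟨M, ⟨hMideal, hMproper, ?_⟩, hIsubM, haM⟩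
  intro x y hxy
  by_contra hcon
  push_neg at hcon
  obtain ⟨hx, hy⟩ := hcon
  -- the ideal generated by M and z, for z = x and z = y
  have key : ∀ z : Q, z ∉ M → ∃ p, 1 ≤ p ∧ ∃ m ∈ M, qpow a p ≤ m ⊔ z := by
    intro z hz
    set J : Set Q := {l | ∃ m ∈ M, l ≤ m ⊔ z} with hJ
    have hJideal : IsIdeal J := by
      refine ⟨⟨z, ⊥, ideal_bot_mem hMideal, le_sup_right⟩, ?_, ?_⟩
      · rintro u ⟨m1, hm1, hu⟩ v ⟨m2, hm2, hv⟩
        refine ⟨m1 ⊔ m2, hMideal.2.1 _ hm1 _ hm2, ?_⟩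
        exact sup_le (hu.trans (sup_le_sup_right le_sup_left z))
          (hv.trans (sup_le_sup_right le_sup_right z))
      · rintro u ⟨m, hm, hu⟩ l hl
        exact ⟨m, hm, hl.trans hu⟩
    have hMsubJ : M ⊆ J := fun m hm => ⟨m, hm, le_sup_left⟩
    have hzJ : z ∈ J := ⟨⊥, ideal_bot_mem hMideal, by simp⟩
    have hJnotA : J ∉ A := by
      intro hJA
      have := hMmax hJA hMsubJ
      exact hz (this hzJ)
    have hIJ : I ⊆ J := hIsubM.trans hMsubJ
    simp only [hA, Set.mem_setOf_eq] at hJnotA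
    push_neg at hJnotA
    obtain ⟨p, hp, hpJ⟩ := hJnotA hJideal hIJ
    obtain ⟨m, hm, hle⟩ := hpJ
    exact ⟨p, hp, m, hm, hle⟩
  obtain ⟨p, hp, m1, hm1, hle1⟩ := key x hx
  obtain ⟨q, hq, m2, hm2, hle2⟩ := key y hy
  have hprod : (m1 ⊔ x) * (m2 ⊔ y) = m1 * m2 ⊔ m1 * y ⊔ (x * m2 ⊔ x * y) := by
    rw [ICQuantale.mul_comm (m1 ⊔ x) (m2 ⊔ y), mul_sup',
      ICQuantale.mul_comm _ m1, ICQuantale.mul_comm _ x, mul_sup', mul_sup']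
  have h1 : m1 * m2 ∈ M := hMideal.2.2 m1 hm1 _ (mul_le_left' _ _)
  have h2 : m1 * y ∈ M := hMideal.2.2 m1 hm1 _ (mul_le_left' _ _)
  have h3 : x * m2 ∈ M := hMideal.2.2 m2 hm2 _ (mul_le_right' _ _)
  have hbig : (m1 ⊔ x) * (m2 ⊔ y) ∈ M := by
    rw [hprod]
    exact hMideal.2.1 _ (hMideal.2.1 _ h1 _ h2) _ (hMideal.2.1 _ h3 _ hxy)
  have hle : qpow a (p + q) ≤ (m1 ⊔ x) * (m2 ⊔ y) := by
    rw [qpow_add']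
    calc qpow a p * qpow a q ≤ qpow a p * (m2 ⊔ y) := mul_mono' _ hle2
      _ = (m2 ⊔ y) * qpow a p := ICQuantale.mul_comm _ _
      _ ≤ (m2 ⊔ y) * (m1 ⊔ x) := mul_mono' _ hle1
      _ = (m1 ⊔ x) * (m2 ⊔ y) := ICQuantale.mul_comm _ _
  exact hMavoid (p + q) (by omega) (hMideal.2.2 _ hbig _ hle)
end Aux

theorem stmt16 {I : Set Q} (hI : IsIdeal I) (hproper : I ≠ Set.univ) :
    ((∀ x : Q, x * x ∈ I → x ∈ I) ↔
        ∃ 𝒮 : Set (Set Q), (∀ P ∈ 𝒮, IsPrimeIdeal P) ∧ I = ⋂₀ 𝒮) ∧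
    ((∀ x : Q, x * x ∈ I → x ∈ I) ↔ rad I = I) := by
  constructor
  · constructor
    · intro hsp
      refine ⟨{P | IsPrimeIdeal P ∧ I ⊆ P}, fun P hP => hP.1, ?_⟩
      apply Set.Subset.antisymm
      · intro z hz P hP
        exact hP.2 hz
      · intro z hz
        by_contra hzI
        obtain ⟨P, hP, hIP, hzP⟩ := exists_prime_avoid hI hsp hzI
        exact hzP (hz P ⟨hP, hIP⟩)
    · rintro ⟨𝒮, h𝒮, rfl⟩ x hx P hP
      rcases (h𝒮 P hP).2.2 x x (hx P hP) with h | h <;> exact h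
  · constructor
    · intro hsp
      apply Set.Subset.antisymm
      · rintro x ⟨n, hn, hx⟩
        exact mem_of_pow_mem hI hsp n hn x hx
      · intro x hx
        exact ⟨1, le_rfl, by rwa [qpow_one']⟩
    · intro hrad x hx
      have hx2 : x ∈ rad I := ⟨2, by omega, by
        show qpow x 1 * x ∈ I
        rwa [qpow_one']⟩
      rwa [hrad] at hx2
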